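/- In the quantum plane E = k⟨x,y⟩/(yx - q·xy), if q is a primitive r-th root of unity with r even, or if char k = 2, then the graded centre of E equals the polynomial subring k[x^r, y^r]. -/

import Mathlib

noncomputable section

open FreeAlgebra

/-- The relation defining the quantum plane `E = k⟨x,y⟩/(yx - q·xy)`. -/
inductive QPRel (k : Type) [Field k] (q : k) :
    FreeAlgebra k (Fin 2) → FreeAlgebra k (Fin 2) → Prop
  | comm : QPRel k q (ι k 1 * ι k 0) (q • (ι k 0 * ι k 1))

/-- The quantum plane `E = k⟨x,y⟩/(yx - q·xy)`. -/
abbrev QP (k : Type) [Field k] (q : k) := RingQuot (QPRel k q)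

/-- The image of `x` in the quantum plane. -/
def qx (k : Type) [Field k] (q : k) : QP k q := RingQuot.mkAlgHom k (QPRel k q) (ι k 0)

/-- The image of `y` in the quantum plane. -/
def qy (k : Type) [Field k] (q : k) : QP k q := RingQuot.mkAlgHom k (QPRel k q) (ι k 1)

/-- The degree-`n` homogeneous component of the quantum plane, spanned by the
monomials `xᵃyᵇ` with `a + b = n` (with `x, y` in degree 1). -/
def QPdeg (k : Type) [Field k] (q : k) (n : ℕ) : Submodule k (QP k q) :=
  Submodule.span k {z | ∃ a b : ℕ, a + b = n ∧ z = qx k q ^ a * qy k q ^ b}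

/-- The graded centre of the quantum plane: the span of the homogeneous elements `z`
(say of degree `n`) such that `zγ = (-1)^{deg z · deg γ} γz` for all homogeneous `γ`. -/
def QPgradedCentre (k : Type) [Field k] (q : k) : Submodule k (QP k q) :=
  Submodule.span k {z | ∃ n : ℕ, z ∈ QPdeg k q n ∧
    ∀ (m : ℕ) (γ : QP k q), γ ∈ QPdeg k q m → z * γ = ((-1 : k) ^ (n * m)) • (γ * z)}

namespace QPAux

variable (k : Type) [Field k] (q : k)

lemma yx : qy k q * qx k q = q • (qx k q * qy k q) := by
  rw [qx, qy, ← map_mul, ← map_mul, ← map_smul]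
  exact RingQuot.mkAlgHom_rel k QPRel.comm

lemma ypow_x (b : ℕ) : qy k q ^ b * qx k q = (q ^ b) • (qx k q * qy k q ^ b) := by
  induction b with
  | zero => simp
  | succ b ih =>
    rw [pow_succ, mul_assoc, yx, mul_smul_comm, ← mul_assoc, ih, smul_mul_assoc,
      smul_smul, mul_assoc, ← pow_succ, ← pow_succ']

lemma ypow_xpow (a b : ℕ) :
    qy k q ^ b * qx k q ^ a = (q ^ (a * b)) • (qx k q ^ a * qy k q ^ b) := by
  induction a with
  | zero => simp
  | succ a ih =>
    rw [pow_succ, ← mul_assoc, ih, smul_mul_assoc, mul_assoc, ypow_x, mul_smul_comm,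
      smul_smul, ← mul_assoc, ← pow_succ, ← pow_add]
    ring_nf

/-- The monomial `xᵃyᵇ` in the quantum plane. -/
def mono (p : ℕ × ℕ) : QP k q := qx k q ^ p.1 * qy k q ^ p.2

lemma mono_mul (p p' : ℕ × ℕ) :
    mono k q p * mono k q p' =
      (q ^ (p'.1 * p.2)) • mono k q (p.1 + p'.1, p.2 + p'.2) := by
  rw [mono, mono, mono, mul_assoc, ← mul_assoc (qy k q ^ p.2), ypow_xpow, smul_mul_assoc,
    mul_smul_comm]
  rw [show qx k q ^ p.1 * (qx k q ^ p'.1 * qy k q ^ p.2 * qy k q ^ p'.2)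
      = (qx k q ^ p.1 * qx k q ^ p'.1) * (qy k q ^ p.2 * qy k q ^ p'.2) by
        simp only [mul_assoc],
    ← pow_add, ← pow_add]

lemma mono_x : mono k q (1, 0) = qx k q := by simp [mono]

lemma mono_y : mono k q (0, 1) = qy k q := by simp [mono]

lemma mono_one : mono k q (0, 0) = 1 := by simp [mono]

lemma mul_x (p : ℕ × ℕ) :
    mono k q p * mono k q (1, 0) = q ^ p.2 • mono k q (p.1 + 1, p.2) := by
  rw [mono_mul]; norm_num

lemma x_mul (p : ℕ × ℕ) :
    mono k q (1, 0) * mono k q p = mono k q (p.1 + 1, p.2) := by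
  rw [mono_mul]; norm_num [add_comm]

lemma mul_y (p : ℕ × ℕ) :
    mono k q p * mono k q (0, 1) = mono k q (p.1, p.2 + 1) := by
  rw [mono_mul]; norm_num

lemma y_mul (p : ℕ × ℕ) :
    mono k q (0, 1) * mono k q p = q ^ p.1 • mono k q (p.1, p.2 + 1) := by
  rw [mono_mul]; norm_num [add_comm]

/-! ### A faithful-enough representation, giving linear independence of monomials -/

abbrev V := (ℕ × ℕ) →₀ k

def Xop : V k →ₗ[k] V k := Finsupp.lmapDomain k k (fun p => (p.1 + 1, p.2))

def Yop : V k →ₗ[k] V k :=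
  Finsupp.lsum ℕ (fun p : ℕ × ℕ => q ^ p.1 • Finsupp.lsingle (p.1, p.2 + 1))

lemma Xop_single (p : ℕ × ℕ) (c : k) :
    Xop k (Finsupp.single p c) = Finsupp.single (p.1 + 1, p.2) c := by
  simp [Xop, Finsupp.mapDomain_single]

lemma Yop_single (p : ℕ × ℕ) (c : k) :
    Yop k q (Finsupp.single p c) = Finsupp.single (p.1, p.2 + 1) (q ^ p.1 * c) := by
  simp [Yop, Finsupp.smul_single]

lemma rel_check : (Yop k q * Xop k : Module.End k (V k)) = q • (Xop k * Yop k q) := by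
  apply Finsupp.lhom_ext
  intro p c
  simp only [Module.End.mul_apply, LinearMap.smul_apply, Xop_single, Yop_single]
  rw [Finsupp.smul_single, smul_eq_mul, pow_succ]
  ring_nf

def φ0 : FreeAlgebra k (Fin 2) →ₐ[k] Module.End k (V k) :=
  FreeAlgebra.lift k ![Xop k, Yop k q]

def φ : QP k q →ₐ[k] Module.End k (V k) :=
  RingQuot.liftAlgHom k ⟨φ0 k q, by
    rintro _ _ ⟨⟩
    simp only [map_mul, map_smul, φ0, FreeAlgebra.lift_ι_apply]
    exact rel_check k q⟩

lemma φ_x : φ k q (qx k q) = Xop k := by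
  rw [qx, φ, RingQuot.liftAlgHom_mkAlgHom_apply]
  simp [φ0, FreeAlgebra.lift_ι_apply]

lemma φ_y : φ k q (qy k q) = Yop k q := by
  rw [qy, φ, RingQuot.liftAlgHom_mkAlgHom_apply]
  simp [φ0, FreeAlgebra.lift_ι_apply]

def ψ : QP k q →ₗ[k] V k :=
  (LinearMap.applyₗ (Finsupp.single ((0 : ℕ), (0 : ℕ)) (1 : k))).comp (φ k q).toLinearMap

lemma Xop_pow (a : ℕ) (p : ℕ × ℕ) (c : k) :
    (Xop k ^ a) (Finsupp.single p c) = Finsupp.single (p.1 + a, p.2) c := by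
  induction a with
  | zero => simp
  | succ a ih =>
      rw [pow_succ', Module.End.mul_apply, ih, Xop_single]
      simp [add_assoc]

lemma Yop_pow (b j : ℕ) (c : k) :
    (Yop k q ^ b) (Finsupp.single ((0 : ℕ), j) c) = Finsupp.single ((0 : ℕ), j + b) c := by
  induction b generalizing j with
  | zero => simp
  | succ b ih =>
      rw [pow_succ, Module.End.mul_apply, Yop_single]
      simp only [pow_zero, one_mul]
      rw [ih (j + 1)]
      simp [add_assoc, add_comm, add_left_comm]

lemma ψ_mono (p : ℕ × ℕ) : ψ k q (mono k q p) = Finsupp.single p 1 := by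
  simp only [ψ, LinearMap.comp_apply, AlgHom.toLinearMap_apply, mono, map_mul, map_pow,
    φ_x, φ_y]
  show (Xop k ^ p.1 * Yop k q ^ p.2) (Finsupp.single ((0 : ℕ), (0 : ℕ)) (1 : k)) = _
  rw [Module.End.mul_apply, Yop_pow, Xop_pow]
  simp

lemma mono_li : LinearIndependent k (mono k q) := by
  apply LinearIndependent.of_comp (ψ k q)
  have : (ψ k q) ∘ (mono k q) = fun p : ℕ × ℕ => Finsupp.single p (1 : k) := by
    funext p; exact ψ_mono k q p
  rw [this]
  have := (Finsupp.basisSingleOne (ι := ℕ × ℕ) (R := k)).linearIndependent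
  rwa [Finsupp.coe_basisSingleOne] at this

lemma coeff_eq {s : Finset (ℕ × ℕ)} {f g : ℕ × ℕ → k} {σ : ℕ × ℕ → ℕ × ℕ}
    (hσ : Function.Injective σ)
    (h : ∑ p ∈ s, f p • mono k q (σ p) = ∑ p ∈ s, g p • mono k q (σ p)) :
    ∀ p ∈ s, f p = g p := by
  have li := (mono_li k q).comp σ hσ
  rw [linearIndependent_iff'] at li
  intro p hp
  have h0 : ∑ p ∈ s, (f p - g p) • (mono k q ∘ σ) p = 0 := by
    calc ∑ p ∈ s, (f p - g p) • (mono k q ∘ σ) p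
        = ∑ p ∈ s, (f p • mono k q (σ p) - g p • mono k q (σ p)) :=
          Finset.sum_congr rfl fun p _ => sub_smul (f p) (g p) (mono k q (σ p))
      _ = ∑ p ∈ s, f p • mono k q (σ p) - ∑ p ∈ s, g p • mono k q (σ p) :=
          Finset.sum_sub_distrib _ _
      _ = 0 := by rw [h, sub_self]
  have := li s (fun p => f p - g p) h0 p hp
  exact sub_eq_zero.mp this

/-! ### Membership in the homogeneous components -/

lemma QPdeg_set (n : ℕ) :
    {z : QP k q | ∃ a b : ℕ, a + b = n ∧ z = qx k q ^ a * qy k q ^ b} =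
      mono k q '' {p : ℕ × ℕ | p.1 + p.2 = n} := by
  ext z
  constructor
  · rintro ⟨a, b, hab, rfl⟩; exact ⟨(a, b), hab, rfl⟩
  · rintro ⟨⟨a, b⟩, hab, rfl⟩; exact ⟨a, b, hab, rfl⟩

lemma mem_QPdeg_iff {n : ℕ} {z : QP k q} :
    z ∈ QPdeg k q n ↔ ∃ c : (ℕ × ℕ) →₀ k,
      (↑c.support ⊆ {p : ℕ × ℕ | p.1 + p.2 = n}) ∧
      z = ∑ p ∈ c.support, c p • mono k q p := by
  rw [QPdeg, QPdeg_set, Finsupp.span_image_eq_map_linearCombination, Submodule.mem_map]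
  constructor
  · rintro ⟨c, hc, rfl⟩
    exact ⟨c, Finsupp.mem_supported _ _ |>.mp hc,
      by rw [Finsupp.linearCombination_apply, Finsupp.sum]⟩
  · rintro ⟨c, hc, rfl⟩
    exact ⟨c, Finsupp.mem_supported _ _ |>.mpr hc,
      by rw [Finsupp.linearCombination_apply, Finsupp.sum]⟩

/-! ### Arithmetic lemmas -/

lemma neg_one_char_two (h2 : ringChar k = 2) : (-1 : k) = 1 := by
  haveI : CharP k 2 := h2 ▸ ringChar.charP k
  exact CharTwo.neg_eq 1

variable {r : ℕ}

lemma q_pow_of_dvd (hq : IsPrimitiveRoot q r) {t : ℕ} (ht : r ∣ t) : q ^ t = 1 := by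
  obtain ⟨u, rfl⟩ := ht
  rw [pow_mul, hq.pow_eq_one, one_pow]

lemma sign_one (h : Even r ∨ ringChar k = 2) {e : ℕ} (he : r ∣ e) (m : ℕ) :
    ((-1 : k)) ^ (e * m) = 1 := by
  rcases h with he' | h2
  · refine Even.neg_one_pow ?_
    obtain ⟨t, rfl⟩ := he'
    obtain ⟨u, rfl⟩ := he
    exact ⟨t * u * m, by ring⟩
  · rw [neg_one_char_two k h2, one_pow]

lemma dvd_of_sign (hq : IsPrimitiveRoot q r) (h : Even r ∨ ringChar k = 2) {a b : ℕ}
    (ha : q ^ a = (-1 : k) ^ (a + b)) (hb : q ^ b = (-1 : k) ^ (a + b)) :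
    r ∣ a ∧ r ∣ b := by
  have hab : q ^ (a + b) = 1 := by
    rw [pow_add, ha, hb, ← pow_add]
    exact Even.neg_one_pow ⟨a + b, rfl⟩
  have hr : r ∣ a + b := hq.dvd_of_pow_eq_one _ hab
  have h1 : (-1 : k) ^ (a + b) = 1 := by
    rcases h with he | h2
    · refine Even.neg_one_pow ?_
      obtain ⟨t, rfl⟩ := he
      obtain ⟨u, hu⟩ := hr
      exact ⟨t * u, by rw [hu]; ring⟩
    · rw [neg_one_char_two k h2, one_pow]
  exact ⟨hq.dvd_of_pow_eq_one a (by rw [ha, h1]), hq.dvd_of_pow_eq_one b (by rw [hb, h1])⟩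

/-! ### The generating set of the graded centre -/

/-- The generating set of the graded centre. -/
def CS : Set (QP k q) :=
  {z | ∃ n : ℕ, z ∈ QPdeg k q n ∧
    ∀ (m : ℕ) (γ : QP k q), γ ∈ QPdeg k q m → z * γ = ((-1 : k) ^ (n * m)) • (γ * z)}

lemma gradedCentre_eq_span : QPgradedCentre k q = Submodule.span k (CS k q) := rfl

lemma QPdeg_mul {n1 n2 : ℕ} {z1 z2 : QP k q} (h1 : z1 ∈ QPdeg k q n1)
    (h2 : z2 ∈ QPdeg k q n2) : z1 * z2 ∈ QPdeg k q (n1 + n2) := by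
  induction h1 using Submodule.span_induction with
  | mem w hw =>
      obtain ⟨a, b, hab, rfl⟩ := hw
      have hw' : qx k q ^ a * qy k q ^ b = mono k q (a, b) := rfl
      rw [hw']
      induction h2 using Submodule.span_induction with
      | mem w2 hw2 =>
          obtain ⟨a', b', hab', rfl⟩ := hw2
          have hw2' : qx k q ^ a' * qy k q ^ b' = mono k q (a', b') := rfl
          rw [hw2', mono_mul]
          refine Submodule.smul_mem _ _ (Submodule.subset_span ⟨a + a', b + b', by omega, rfl⟩)
      | zero => simpa using Submodule.zero_mem _
      | add x y hx hy ihx ihy => rw [mul_add]; exact Submodule.add_mem _ ihx ihy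
      | smul t x hx ihx => rw [mul_smul_comm]; exact Submodule.smul_mem _ _ ihx
  | zero => simpa using Submodule.zero_mem _
  | add x y hx hy ihx ihy => rw [add_mul]; exact Submodule.add_mem _ ihx ihy
  | smul t x hx ihx => rw [smul_mul_assoc]; exact Submodule.smul_mem _ _ ihx

lemma CS_mul {z1 z2 : QP k q} (h1 : z1 ∈ CS k q) (h2 : z2 ∈ CS k q) :
    z1 * z2 ∈ CS k q := by
  obtain ⟨n1, hd1, hc1⟩ := h1
  obtain ⟨n2, hd2, hc2⟩ := h2
  refine ⟨n1 + n2, QPdeg_mul k q hd1 hd2, fun m γ hγ => ?_⟩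
  rw [mul_assoc, hc2 m γ hγ, mul_smul_comm, ← mul_assoc, hc1 m γ hγ, smul_mul_assoc,
    smul_smul, ← mul_assoc, ← pow_add]
  congr 2
  ring

lemma centre_mul {z1 z2 : QP k q} (h1 : z1 ∈ QPgradedCentre k q)
    (h2 : z2 ∈ QPgradedCentre k q) : z1 * z2 ∈ QPgradedCentre k q := by
  rw [gradedCentre_eq_span] at *
  induction h1 using Submodule.span_induction with
  | mem w hw =>
      induction h2 using Submodule.span_induction with
      | mem w2 hw2 => exact Submodule.subset_span (CS_mul k q hw hw2)
      | zero => simpa using Submodule.zero_mem _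
      | add x y hx hy ihx ihy => rw [mul_add]; exact Submodule.add_mem _ ihx ihy
      | smul t x hx ihx => rw [mul_smul_comm]; exact Submodule.smul_mem _ _ ihx
  | zero => simpa using Submodule.zero_mem _
  | add x y hx hy ihx ihy => rw [add_mul]; exact Submodule.add_mem _ ihx ihy
  | smul t x hx ihx => rw [smul_mul_assoc]; exact Submodule.smul_mem _ _ ihx

lemma central_mono (hq : IsPrimitiveRoot q r) (h : Even r ∨ ringChar k = 2) {a b : ℕ}
    (hra : r ∣ a) (hrb : r ∣ b) : mono k q (a, b) ∈ CS k q := by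
  refine ⟨a + b, Submodule.subset_span ⟨a, b, rfl, rfl⟩, fun m γ hγ => ?_⟩
  induction hγ using Submodule.span_induction with
  | mem w hw =>
      obtain ⟨a', b', hm, rfl⟩ := hw
      have hw' : qx k q ^ a' * qy k q ^ b' = mono k q (a', b') := rfl
      rw [hw', mono_mul, mono_mul, q_pow_of_dvd k q hq (hrb.mul_left a'),
        q_pow_of_dvd k q hq (hra.mul_right b'),
        sign_one k h (dvd_add hra hrb) m, one_smul, one_smul, one_smul]
      simp [add_comm]
  | zero => simp
  | add x y hx hy ihx ihy => rw [mul_add, ihx, ihy, ← smul_add, ← add_mul]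
  | smul t x hx ihx => rw [mul_smul_comm, ihx, smul_mul_assoc, smul_comm]

/-! ### The two inclusions -/

lemma adjoin_le_centre (hq : IsPrimitiveRoot q r) (h : Even r ∨ ringChar k = 2) :
    Subalgebra.toSubmodule (Algebra.adjoin k {qx k q ^ r, qy k q ^ r}) ≤
      QPgradedCentre k q := by
  intro w hw
  rw [Subalgebra.mem_toSubmodule] at hw
  induction hw using Algebra.adjoin_induction with
  | mem z hz =>
      rcases hz with rfl | rfl
      · have hxr : qx k q ^ r = mono k q (r, 0) := by simp [mono]
        rw [hxr]
        exact Submodule.subset_span (central_mono k q hq h dvd_rfl (dvd_zero r))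
      · have hyr : qy k q ^ r = mono k q (0, r) := by simp [mono]
        rw [hyr]
        exact Submodule.subset_span (central_mono k q hq h (dvd_zero r) dvd_rfl)
  | algebraMap c =>
      rw [Algebra.algebraMap_eq_smul_one]
      refine Submodule.smul_mem _ _ (Submodule.subset_span ?_)
      have h1 : (1 : QP k q) = mono k q (0, 0) := (mono_one k q).symm
      rw [h1]
      exact central_mono k q hq h (dvd_zero r) (dvd_zero r)
  | add x y hx hy ihx ihy => exact Submodule.add_mem _ ihx ihy
  | mul x y hx hy ihx ihy => exact centre_mul k q ihx ihy

set_option maxHeartbeats 1000000 in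
lemma centre_le_adjoin (hq : IsPrimitiveRoot q r) (h : Even r ∨ ringChar k = 2) :
    QPgradedCentre k q ≤
      Subalgebra.toSubmodule (Algebra.adjoin k {qx k q ^ r, qy k q ^ r}) := by
  rw [gradedCentre_eq_span]
  refine Submodule.span_le.mpr ?_
  rintro z ⟨n, hzn, hcomm⟩
  obtain ⟨c, hsupp, rfl⟩ := (mem_QPdeg_iff k q).mp hzn
  have hx1 : qx k q ∈ QPdeg k q 1 := Submodule.subset_span ⟨1, 0, rfl, by simp⟩
  have hy1 : qy k q ∈ QPdeg k q 1 := Submodule.subset_span ⟨0, 1, rfl, by simp⟩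
  have e1 := hcomm 1 (qx k q) hx1
  have e2 := hcomm 1 (qy k q) hy1
  have e1' : ∑ p ∈ c.support, (c p * q ^ p.2) • mono k q (p.1 + 1, p.2)
      = ∑ p ∈ c.support, ((-1 : k) ^ (n * 1) * c p) • mono k q (p.1 + 1, p.2) := by
    calc ∑ p ∈ c.support, (c p * q ^ p.2) • mono k q (p.1 + 1, p.2)
        = ∑ p ∈ c.support, (c p • mono k q p) * mono k q (1, 0) :=
          Finset.sum_congr rfl fun p _ => by rw [smul_mul_assoc, mul_x, smul_smul]
      _ = (∑ p ∈ c.support, c p • mono k q p) * mono k q (1, 0) :=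
          (Finset.sum_mul _ _ _).symm
      _ = ((-1 : k) ^ (n * 1)) • (mono k q (1, 0) * ∑ p ∈ c.support, c p • mono k q p) := by
          rw [mono_x]; exact e1
      _ = ∑ p ∈ c.support, ((-1 : k) ^ (n * 1) * c p) • mono k q (p.1 + 1, p.2) := by
          rw [Finset.mul_sum, Finset.smul_sum]
          exact Finset.sum_congr rfl fun p _ => by rw [mul_smul_comm, x_mul, smul_smul]
  have e2' : ∑ p ∈ c.support, (c p) • mono k q (p.1, p.2 + 1)
      = ∑ p ∈ c.support, ((-1 : k) ^ (n * 1) * (c p * q ^ p.1)) • mono k q (p.1, p.2 + 1) := by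
    calc ∑ p ∈ c.support, (c p) • mono k q (p.1, p.2 + 1)
        = ∑ p ∈ c.support, (c p • mono k q p) * mono k q (0, 1) :=
          Finset.sum_congr rfl fun p _ => by rw [smul_mul_assoc, mul_y]
      _ = (∑ p ∈ c.support, c p • mono k q p) * mono k q (0, 1) :=
          (Finset.sum_mul _ _ _).symm
      _ = ((-1 : k) ^ (n * 1)) • (mono k q (0, 1) * ∑ p ∈ c.support, c p • mono k q p) := by
          rw [mono_y]; exact e2
      _ = ∑ p ∈ c.support, ((-1 : k) ^ (n * 1) * (c p * q ^ p.1)) • mono k q (p.1, p.2 + 1) := by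
          rw [Finset.mul_sum, Finset.smul_sum]
          exact Finset.sum_congr rfl fun p _ => by
            rw [mul_smul_comm, y_mul, smul_smul, smul_smul, mul_comm (c p) (q ^ p.1),
              mul_assoc, mul_comm (q ^ p.1) (c p)]
  have hσ1 : Function.Injective (fun p : ℕ × ℕ => (p.1 + 1, p.2)) := by
    intro p p' hpp
    cases p; cases p'
    simpa [Prod.ext_iff] using hpp
  have hσ2 : Function.Injective (fun p : ℕ × ℕ => (p.1, p.2 + 1)) := by
    intro p p' hpp
    cases p; cases p'
    simpa [Prod.ext_iff] using hpp
  have hc1 := coeff_eq k q hσ1 e1'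
  have hc2 := coeff_eq k q hσ2 e2'
  refine Submodule.sum_mem _ fun p hp => Submodule.smul_mem _ _ ?_
  have hpn : p.1 + p.2 = n := hsupp hp
  have hcp : c p ≠ 0 := Finsupp.mem_support_iff.mp hp
  have hq2 : q ^ p.2 = (-1 : k) ^ (n * 1) := by
    have h1 := hc1 p hp
    rw [mul_comm ((-1 : k) ^ (n * 1)) (c p)] at h1
    exact mul_left_cancel₀ hcp h1
  have hq1 : q ^ p.1 = (-1 : k) ^ (n * 1) := by
    have h2 := hc2 p hp
    have h3 : c p * 1 = c p * ((-1 : k) ^ (n * 1) * q ^ p.1) := by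
      rw [mul_one]
      nth_rewrite 1 [h2]
      ring
    have h4 := mul_left_cancel₀ hcp h3
    have hs2 : (-1 : k) ^ (n * 1) * (-1 : k) ^ (n * 1) = 1 := by
      rw [← pow_add]
      exact Even.neg_one_pow ⟨n * 1, rfl⟩
    calc q ^ p.1 = ((-1 : k) ^ (n * 1) * (-1 : k) ^ (n * 1)) * q ^ p.1 := by
          rw [hs2, one_mul]
      _ = (-1 : k) ^ (n * 1) * ((-1 : k) ^ (n * 1) * q ^ p.1) := by ring
      _ = (-1 : k) ^ (n * 1) := by rw [← h4, mul_one]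
  have hsgn : ((-1 : k)) ^ (n * 1) = (-1 : k) ^ (p.1 + p.2) := by rw [mul_one, hpn]
  obtain ⟨hra, hrb⟩ := dvd_of_sign k q hq h (hq1.trans hsgn) (hq2.trans hsgn)
  rw [Subalgebra.mem_toSubmodule]
  obtain ⟨u, hu⟩ := hra
  obtain ⟨v, hv⟩ := hrb
  have hmp : mono k q p = (qx k q ^ r) ^ u * (qy k q ^ r) ^ v := by
    rw [mono, hu, hv, ← pow_mul, ← pow_mul]
  rw [hmp]
  have m1 : qx k q ^ r ∈ Algebra.adjoin k {qx k q ^ r, qy k q ^ r} :=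
    Algebra.subset_adjoin (Set.mem_insert _ _)
  have m2 : qy k q ^ r ∈ Algebra.adjoin k {qx k q ^ r, qy k q ^ r} :=
    Algebra.subset_adjoin (Set.mem_insert_of_mem _ rfl)
  exact Subalgebra.mul_mem _ (Subalgebra.pow_mem _ m1 u) (Subalgebra.pow_mem _ m2 v)

end QPAux

/-- If `q` is a primitive `r`-th root of unity with `r` even, or if `char k = 2`,
then the graded centre of the quantum plane equals the polynomial subring `k[xʳ, yʳ]`. -/
theorem qp_gradedCentre_even_or_char_two (k : Type) [Field k] (q : k) (r : ℕ)
    (hq : IsPrimitiveRoot q r) (h : Even r ∨ ringChar k = 2) :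
    QPgradedCentre k q =
      Subalgebra.toSubmodule (Algebra.adjoin k {qx k q ^ r, qy k q ^ r}) :=
  le_antisymm (QPAux.centre_le_adjoin k q hq h) (QPAux.adjoin_le_centre k q hq h)
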